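/- arXiv:1007.0133 — 2 statements merged into one kernel-verified Lean document; each statement's English description precedes it below -/
import Mathlib

section
/- The polynomial algebra ℂ[y_1,...,y_n] is a free module of rank n! over the subring of symmetric polynomials ℂ[y_1,...,y_n]^{S_n}, with free basis given by the set of monomials {y_1^{a_1} ⋯ y_n^{a_n} : 0 ≤ a_i < i for all 1 ≤ i ≤ n}. -/
open MvPolynomial Polynomial

namespace PFOS

variable {n : ℕ}

abbrev A (n : ℕ) := MvPolynomial (Fin n) ℂ

/-- The subalgebra generated by the symmetric polynomials together with the
variables `X j` for `j ≥ k`. -/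
noncomputable def B (n k : ℕ) : Subalgebra ℂ (A n) :=
  symmetricSubalgebra (Fin n) ℂ ⊔ Algebra.adjoin ℂ {x | ∃ j : Fin n, k ≤ j.1 ∧ x = X j}

noncomputable def Q (n m : ℕ) : Polynomial (A n) :=
  ∏ i ∈ Finset.univ.filter (fun i : Fin n => i.1 < m), (Polynomial.X - Polynomial.C (X i))

/-- span of the powers `X k ^ j`, `j ≤ k`, over `B n (k+1)`. -/
noncomputable def N (n k : ℕ) (hk : k < n) : Submodule (B n (k + 1)) (A n) :=
  Submodule.span (B n (k + 1)) (Set.range fun j : Fin (k + 1) => X (⟨k, hk⟩ : Fin n) ^ (j : ℕ))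

lemma B_anti {k l : ℕ} (h : k ≤ l) : B n l ≤ B n k := by
  apply sup_le le_sup_left
  apply le_trans _ le_sup_right
  apply Algebra.adjoin_mono
  rintro x ⟨j, hj, rfl⟩
  exact ⟨j, h.trans hj, rfl⟩

lemma X_mem_B {k : ℕ} (j : Fin n) (hj : k ≤ j.1) : X j ∈ B n k :=
  (le_sup_right : _ ≤ B n k) (Algebra.subset_adjoin ⟨j, hj, rfl⟩)

lemma sym_le_B (k : ℕ) : symmetricSubalgebra (Fin n) ℂ ≤ B n k := le_sup_left

lemma B_n_eq : B n n = symmetricSubalgebra (Fin n) ℂ := by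
  apply le_antisymm _ le_sup_left
  apply sup_le le_rfl
  have : {x | ∃ j : Fin n, n ≤ j.1 ∧ x = X j} = (∅ : Set (A n)) := by
    ext x; simp only [Set.mem_setOf_eq, Set.mem_empty_iff_false, iff_false]
    rintro ⟨j, hj, rfl⟩; exact absurd j.2 (not_lt.2 hj)
  rw [this, Algebra.adjoin_empty]
  exact bot_le

lemma B_zero_eq : B n 0 = ⊤ := by
  rw [eq_top_iff]
  intro x _
  have : x ∈ Algebra.adjoin ℂ (Set.range (X : Fin n → A n)) := by
    rw [MvPolynomial.adjoin_range_X]; trivial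
  refine (le_sup_right : _ ≤ B n 0) (Algebra.adjoin_mono ?_ this)
  rintro y ⟨j, rfl⟩
  exact ⟨j, Nat.zero_le _, rfl⟩

lemma rename_fix {k : ℕ} (e : Equiv.Perm (Fin n)) (he : ∀ j : Fin n, k ≤ j.1 → e j = j)
    {x : A n} (hx : x ∈ B n k) : rename e x = x := by
  have : B n k ≤ AlgHom.equalizer (rename e : A n →ₐ[ℂ] A n) (AlgHom.id ℂ (A n)) := by
    apply sup_le
    · intro y hy; exact (mem_symmetricSubalgebra y).1 hy e
    · rw [Algebra.adjoin_le_iff]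
      rintro y ⟨j, hj, rfl⟩
      show rename e (X j) = X j
      rw [rename_X, he j hj]
  exact this hx

lemma Q_monic (m : ℕ) : (Q n m).Monic :=
  monic_prod_of_monic _ _ fun i _ => monic_X_sub_C _

lemma filter_eq (m : ℕ) (hm : m ≤ n) :
    Finset.univ.filter (fun i : Fin n => i.1 < m)
      = (Finset.univ : Finset (Fin m)).map (Fin.castLEEmb hm) := by
  ext j
  simp only [Finset.mem_filter, Finset.mem_univ, true_and, Finset.mem_map, Fin.castLEEmb]
  constructor
  · intro hj; exact ⟨⟨j.1, hj⟩, by simp [Fin.castLE, Fin.ext_iff]⟩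
  · rintro ⟨i, hi⟩
    subst hi
    simpa using i.2

lemma Q_natDegree (m : ℕ) (hm : m ≤ n) : (Q n m).natDegree = m := by
  rw [Q, Polynomial.natDegree_prod_of_monic _ _ (fun i _ => monic_X_sub_C _)]
  simp [filter_eq m hm]

lemma Q_succ (m : ℕ) (hm : m < n) :
    Q n (m + 1) = (Polynomial.X - Polynomial.C (X (⟨m, hm⟩ : Fin n))) * Q n m := by
  rw [Q, Q, show Finset.univ.filter (fun i : Fin n => i.1 < m + 1)
      = insert (⟨m, hm⟩ : Fin n) (Finset.univ.filter (fun i : Fin n => i.1 < m)) from ?_,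
    Finset.prod_insert (by simp)]
  ext j
  simp only [Finset.mem_insert, Finset.mem_filter, Finset.mem_univ, true_and]
  constructor
  · intro hj
    rcases Nat.lt_succ_iff_lt_or_eq.1 hj with h | h
    · exact Or.inr h
    · exact Or.inl (Fin.ext h)
  · rintro (rfl | hj)
    · exact Nat.lt_succ_self m
    · exact hj.trans (Nat.lt_succ_self m)

lemma Q_eval_zero (k : ℕ) (hk : k < n) : (Q n (k + 1)).eval (X (⟨k, hk⟩ : Fin n)) = 0 := by
  rw [Q, Polynomial.eval_prod]
  apply Finset.prod_eq_zero (i := (⟨k, hk⟩ : Fin n)) (by simp)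
  simp


lemma Q_top_symm (j : ℕ) : (Q n n).coeff j ∈ symmetricSubalgebra (Fin n) ℂ := by
  rw [mem_symmetricSubalgebra]
  intro e
  have hmap : Polynomial.map ((rename (e : Fin n → Fin n)).toRingHom : A n →+* A n) (Q n n) = Q n n := by
    rw [Q, Polynomial.map_prod]
    have h1 : Finset.univ.filter (fun i : Fin n => i.1 < n) = Finset.univ := by
      apply Finset.filter_true_of_mem; intro i _; exact i.2
    rw [h1]
    calc ∏ i : Fin n, Polynomial.map ((rename (e : Fin n → Fin n)).toRingHom : A n →+* A n) (Polynomial.X - Polynomial.C (X i))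
        = ∏ i : Fin n, (Polynomial.X - Polynomial.C (X (e i))) := by
          apply Finset.prod_congr rfl; intro i _
          simp only [Polynomial.map_sub, Polynomial.map_X, Polynomial.map_C, AlgHom.toRingHom_eq_coe, AlgHom.coe_toRingHom, rename_X]
      _ = ∏ i : Fin n, (Polynomial.X - Polynomial.C (X i)) := Equiv.prod_comp e fun i => (Polynomial.X - Polynomial.C (X i))
  have := congrArg (fun p => Polynomial.coeff p j) hmap
  simpa [Polynomial.coeff_map] using this


lemma Q_coeff_rec (m : ℕ) (hm : m < n) (j : ℕ) :
    (Q n m).coeff j = (Q n (m + 1)).coeff (j + 1)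
      + X (⟨m, hm⟩ : Fin n) * (Q n m).coeff (j + 1) := by
  rw [Q_succ m hm, sub_mul, Polynomial.coeff_sub, Polynomial.coeff_X_mul,
    Polynomial.coeff_C_mul]
  ring

lemma Q_coeff_mem : ∀ m, m ≤ n → ∀ j, (Q n m).coeff j ∈ B n m := by
  suffices h : ∀ d m, m + d = n → ∀ j, (Q n m).coeff j ∈ B n m by
    intro m hm j
    exact h (n - m) m (by omega) j
  intro d
  induction d with
  | zero =>
    intro m hm j
    rw [Nat.add_zero] at hm; subst hm
    exact sym_le_B _ (Q_top_symm j)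
  | succ d ih =>
    intro m hm
    have hmn : m < n := by omega
    have key : ∀ t j, m ≤ j + t → (Q n m).coeff j ∈ B n m := by
      intro t
      induction t with
      | zero =>
        intro j hj
        rcases eq_or_lt_of_le (by simpa using hj) with h | h
        · have h1 := (Q_monic (n := n) m).coeff_natDegree
          rw [Q_natDegree m hmn.le] at h1
          rw [← h, h1]
          exact one_mem _
        · rw [Polynomial.coeff_eq_zero_of_natDegree_lt]
          · exact zero_mem _
          · rw [Q_natDegree m hmn.le]; omega
      | succ t iht =>
        intro j hj
        by_cases h : m ≤ j + t
        · exact iht j h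
        · rw [Q_coeff_rec m hmn j]
          refine add_mem ?_ (mul_mem (X_mem_B _ le_rfl) (iht (j + 1) (by omega)))
          exact B_anti (Nat.le_succ m) (ih (m + 1) (by omega) (j + 1))
    intro j
    exact key m j (by omega)


lemma X_pow_top (k : ℕ) (hk : k < n) :
    X (⟨k, hk⟩ : Fin n) ^ (k + 1)
      = - ∑ j ∈ Finset.range (k + 1), (Q n (k + 1)).coeff j * X (⟨k, hk⟩ : Fin n) ^ j := by
  have h0 := Q_eval_zero k hk
  rw [Polynomial.eval_eq_sum_range, Q_natDegree (k + 1) hk] at h0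
  rw [Finset.sum_range_succ] at h0
  have h1 := (Q_monic (n := n) (k + 1)).coeff_natDegree
  rw [Q_natDegree (k + 1) hk] at h1
  rw [h1, one_mul] at h0
  linear_combination h0

lemma X_pow_mem_N (k : ℕ) (hk : k < n) : ∀ m : ℕ, X (⟨k, hk⟩ : Fin n) ^ m ∈ N n k hk := by
  intro m
  induction m using Nat.strong_induction_on with
  | _ m ih =>
    by_cases hm : m ≤ k
    · exact Submodule.subset_span ⟨⟨m, by omega⟩, rfl⟩
    · have hm' : m = (m - (k + 1)) + (k + 1) := by omega
      rw [hm', pow_add, X_pow_top k hk, mul_neg, Finset.mul_sum]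
      apply neg_mem
      apply Submodule.sum_mem
      intro j hj
      rw [Finset.mem_range] at hj
      have : X (⟨k, hk⟩ : Fin n) ^ (m - (k + 1)) * ((Q n (k + 1)).coeff j * X (⟨k, hk⟩ : Fin n) ^ j)
          = (⟨(Q n (k + 1)).coeff j, Q_coeff_mem (k+1) hk j⟩ : B n (k + 1))
            • (X (⟨k, hk⟩ : Fin n) ^ (j + (m - (k + 1)))) := by
        rw [Subalgebra.smul_def, smul_eq_mul, pow_add]
        ring
      rw [this]
      exact Submodule.smul_mem _ _ (ih (j + (m - (k + 1))) (by omega))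

lemma N_mul_mem (k : ℕ) (hk : k < n) {x y : A n} (hx : x ∈ N n k hk) (hy : y ∈ N n k hk) :
    x * y ∈ N n k hk := by
  induction hx using Submodule.span_induction with
  | mem x hx =>
    obtain ⟨j, rfl⟩ := hx
    induction hy using Submodule.span_induction with
    | mem y hy =>
      obtain ⟨j', rfl⟩ := hy
      rw [← pow_add]
      exact X_pow_mem_N k hk _
    | zero => rw [mul_zero]; exact zero_mem _
    | add y z _ _ h1 h2 => rw [mul_add]; exact add_mem h1 h2
    | smul c y _ h1 => rw [Subalgebra.smul_def, smul_eq_mul, mul_left_comm,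
        ← smul_eq_mul, ← Subalgebra.smul_def]; exact Submodule.smul_mem _ _ h1
  | zero => rw [zero_mul]; exact zero_mem _
  | add x z _ _ h1 h2 => rw [add_mul]; exact add_mem h1 h2
  | smul c x _ h1 => rw [Subalgebra.smul_def, smul_eq_mul, mul_assoc,
      ← smul_eq_mul, ← Subalgebra.smul_def]; exact Submodule.smul_mem _ _ h1

lemma one_mem_N (k : ℕ) (hk : k < n) : (1 : A n) ∈ N n k hk := by
  simpa using X_pow_mem_N k hk 0

lemma B_le_N (k : ℕ) (hk : k < n) : ∀ x ∈ B n k, x ∈ N n k hk := by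
  intro x hx
  -- N as a subalgebra
  let S : Subalgebra ℂ (A n) :=
    Submodule.toSubalgebra ((N n k hk).restrictScalars ℂ) (one_mem_N k hk)
      (fun a b ha hb => N_mul_mem k hk ha hb)
  have hBS : B n k ≤ S := by
    apply sup_le
    · intro y hy
      show y ∈ N n k hk
      have : y ∈ B n (k + 1) := (le_sup_left : _ ≤ B n (k+1)) hy
      have h1 : y = (⟨y, this⟩ : B n (k + 1)) • (1 : A n) := by
        rw [Subalgebra.smul_def, smul_eq_mul, mul_one]
      rw [h1]
      exact Submodule.smul_mem _ _ (one_mem_N k hk)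
    · rw [Algebra.adjoin_le_iff]
      rintro y ⟨j, hj, rfl⟩
      show X j ∈ N n k hk
      rcases eq_or_lt_of_le hj with h | h
      · have : j = (⟨k, hk⟩ : Fin n) := Fin.ext h.symm
        rw [this]
        simpa using X_pow_mem_N k hk 1
      · have hmem : X j ∈ B n (k + 1) := X_mem_B j h
        have h1 : X j = (⟨X j, hmem⟩ : B n (k + 1)) • (1 : A n) := by
          rw [Subalgebra.smul_def, smul_eq_mul, mul_one]
        rw [h1]
        exact Submodule.smul_mem _ _ (one_mem_N k hk)
  exact hBS hx


lemma powers_indep (k : ℕ) (hk : k < n) (d : Fin (k + 1) → B n (k + 1))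
    (h : ∑ j : Fin (k + 1), (d j : A n) * X (⟨k, hk⟩ : Fin n) ^ (j : ℕ) = 0) :
    ∀ j, d j = 0 := by
  set emb : Fin (k + 1) → Fin n := fun i => ⟨i.1, by omega⟩ with hemb
  have hembv : ∀ i, (emb i).1 = i.1 := fun i => rfl
  have hrow : ∀ i : Fin (k + 1), ∑ j : Fin (k + 1), (d j : A n) * X (emb i) ^ (j : ℕ) = 0 := by
    intro i
    have he : ∀ j : Fin n, k + 1 ≤ j.1 → Equiv.swap (emb i) (⟨k, hk⟩ : Fin n) j = j := by
      intro j hj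
      apply Equiv.swap_apply_of_ne_of_ne
      · intro hcon; rw [hcon, hembv] at hj; omega
      · intro hcon; rw [hcon] at hj; simp at hj
    have := congrArg (rename (Equiv.swap (emb i) (⟨k, hk⟩ : Fin n)) : A n →ₐ[ℂ] A n) h
    rw [map_sum, map_zero] at this
    convert this using 2 with j
    rw [map_mul, map_pow, rename_X, Equiv.swap_apply_right,
      rename_fix _ he (d j).2]
  set c : Fin (k + 1) → A n := fun j => (d j : A n) with hc
  set V := Matrix.vandermonde (fun i : Fin (k + 1) => (X (emb i) : A n)) with hV
  have hVc : V.mulVec c = 0 := by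
    funext i
    simpa [hV, hc, Matrix.mulVec, dotProduct, Matrix.vandermonde, mul_comm] using hrow i
  have hdet : V.det ≠ 0 := by
    rw [Matrix.det_vandermonde]
    apply Finset.prod_ne_zero_iff.2
    intro i _
    apply Finset.prod_ne_zero_iff.2
    intro j hj
    rw [Finset.mem_Ioi] at hj
    apply sub_ne_zero.2
    apply (MvPolynomial.X_injective).ne
    intro hcon
    have hij : (emb j).1 = (emb i).1 := congrArg Fin.val hcon
    simp only [hembv] at hij
    have hj' : i.1 < j.1 := hj
    omega
  have hzero : V.det • c = 0 := by
    have h2 : (V.det • (1 : Matrix (Fin (k + 1)) (Fin (k + 1)) (A n))).mulVec c = 0 := by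
      rw [← Matrix.adjugate_mul, ← Matrix.mulVec_mulVec, hVc, Matrix.mulVec_zero]
    rwa [Matrix.smul_mulVec, Matrix.one_mulVec] at h2
  intro j
  have : V.det * c j = 0 := by
    have := congrFun hzero j
    simpa using this
  have hcj : c j = 0 := by
    rcases mul_eq_zero.1 this with h1 | h1
    · exact absurd h1 hdet
    · exact h1
  exact Subtype.ext hcj


/-- the staircase monomials in the first `k` variables -/
noncomputable def mon {k : ℕ} (hk : k ≤ n) (a : (i : Fin k) → Fin (i.1 + 1)) : A n :=
  ∏ i : Fin k, X (Fin.castLE hk i) ^ (a i : ℕ)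

lemma mon_snoc {k : ℕ} (hk : k + 1 ≤ n) (b : (i : Fin k) → Fin (i.1 + 1)) (j : Fin (k + 1)) :
    mon hk (Fin.snoc b j) = mon (Nat.le_of_succ_le hk) b
      * X (⟨k, Nat.lt_of_succ_le hk⟩ : Fin n) ^ (j : ℕ) := by
  rw [mon, Fin.prod_univ_castSucc]
  congr 1
  · rw [mon]
    apply Finset.prod_congr rfl
    intro i _
    have h1 : (Fin.snoc b j : (i : Fin (k+1)) → Fin (i.1 + 1)) i.castSucc = b i := by
      simp [Fin.snoc_castSucc]
    have h2 : Fin.castLE hk i.castSucc = Fin.castLE (Nat.le_of_succ_le hk) i := rfl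
    rw [h1, h2]
  · have h1 : (Fin.snoc b j : (i : Fin (k+1)) → Fin (i.1 + 1)) (Fin.last k) = j := by
      simp [Fin.snoc_last]
    rw [h1]
    rfl

lemma mon_self {k : ℕ} (hk : k + 1 ≤ n) (a : (i : Fin (k + 1)) → Fin (i.1 + 1)) :
    Fin.snoc (fun i : Fin k => a i.castSucc) (a (Fin.last k)) = a :=
  Fin.snoc_init_self a


/-- splitting off the last coordinate -/
def E (k : ℕ) : ((i : Fin (k + 1)) → Fin (i.1 + 1))
    ≃ ((i : Fin k) → Fin (i.1 + 1)) × Fin (k + 1) where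
  toFun a := (fun i => a i.castSucc, a (Fin.last k))
  invFun p := Fin.snoc p.1 p.2
  left_inv a := Fin.snoc_init_self a
  right_inv p := by
    refine Prod.ext ?_ ?_
    · funext i
      simp [Fin.snoc_castSucc]
    · simp [Fin.snoc_last]

set_option maxHeartbeats 2000000 in
theorem main_indep (k : ℕ) (hk : k + 1 ≤ n)
    (ihLI : LinearIndependent (B n k) (mon (Nat.le_of_succ_le hk))) :
    LinearIndependent (B n (k + 1)) (mon hk) := by
  have hkn : k < n := hk
  have hk' : k ≤ n := Nat.le_of_succ_le hk
  set xk : A n := X (⟨k, hkn⟩ : Fin n) with hxk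
  rw [Fintype.linearIndependent_iff]
  intro g hg a
  have hcmem : ∀ b : (i : Fin k) → Fin (i.1 + 1),
      ∑ j : Fin (k + 1), (g (Fin.snoc b j) : A n) * xk ^ (j : ℕ) ∈ B n k := by
    intro b
    apply sum_mem
    intro j _
    exact mul_mem (B_anti (Nat.le_succ k) (g (Fin.snoc b j)).2)
      (pow_mem (X_mem_B (n := n) (k := k) ⟨k, hkn⟩ le_rfl) (j : ℕ))
  have hsum : ∑ b, (⟨_, hcmem b⟩ : B n k) • mon hk' b = 0 := by
    calc ∑ b, (⟨_, hcmem b⟩ : B n k) • mon hk' b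
        = ∑ b : (i : Fin k) → Fin (i.1 + 1), ∑ j : Fin (k + 1),
            (g (Fin.snoc b j) : A n) • mon hk (Fin.snoc b j) := by
          apply Finset.sum_congr rfl
          intro b _
          rw [Subalgebra.smul_def, smul_eq_mul]
          show (∑ j : Fin (k + 1), (g (Fin.snoc b j) : A n) * xk ^ (j : ℕ)) * mon hk' b = _
          rw [Finset.sum_mul]
          apply Finset.sum_congr rfl
          intro j _
          rw [mon_snoc hk b j, smul_eq_mul, ← hxk]
          ring
      _ = ∑ p : ((i : Fin k) → Fin (i.1 + 1)) × Fin (k + 1),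
            (g (Fin.snoc p.1 p.2) : A n) • mon hk (Fin.snoc p.1 p.2) :=
          (Fintype.sum_prod_type (f := fun p : (((i : Fin k) → Fin (i.1 + 1)) × Fin (k + 1)) =>
            (g (Fin.snoc p.1 p.2) : A n) • mon hk (Fin.snoc p.1 p.2))).symm
      _ = ∑ a, (g a : A n) • mon hk a := by
          apply Fintype.sum_equiv (E k).symm
          intro p
          rfl
      _ = 0 := by
          rw [← hg]
          apply Finset.sum_congr rfl
          intro a _
          rw [Subalgebra.smul_def]
  have hcz := (Fintype.linearIndependent_iff.1 ihLI) (fun b => ⟨_, hcmem b⟩) hsum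
  have hz : ∀ b j, g (Fin.snoc b j) = 0 := by
    intro b
    apply powers_indep k hkn (fun j => g (Fin.snoc b j))
    exact congrArg Subtype.val (hcz b)
  have h3 : g a = g (Fin.snoc (fun i : Fin k => a i.castSucc) (a (Fin.last k))) :=
    congrArg g (mon_self hk a).symm
  rw [h3]
  exact hz _ _

theorem main_span (k : ℕ) (hk : k + 1 ≤ n)
    (ihSP : Submodule.span (B n k) (Set.range (mon (Nat.le_of_succ_le hk))) = ⊤) :
    Submodule.span (B n (k + 1)) (Set.range (mon hk)) = ⊤ := by
  have hkn : k < n := hk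
  have hk' : k ≤ n := Nat.le_of_succ_le hk
  set xk : A n := X (⟨k, hkn⟩ : Fin n) with hxk
  set T := Submodule.span (B n (k + 1)) (Set.range (mon hk)) with hT
  have memT : ∀ a, mon hk a ∈ T := fun a => Submodule.subset_span ⟨a, rfl⟩
  have mulXk : ∀ x ∈ T, xk * x ∈ T := by
    intro x hx
    induction hx using Submodule.span_induction with
    | mem y hy =>
      obtain ⟨a, rfl⟩ := hy
      set b : (i : Fin k) → Fin (i.1 + 1) := fun i => a i.castSucc with hb
      have hmona : mon hk a = mon hk' b * xk ^ ((a (Fin.last k) : ℕ)) := by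
        conv_lhs => rw [← mon_self hk a]
        exact mon_snoc hk b (a (Fin.last k))
      by_cases h : (a (Fin.last k) : ℕ) < k
      · have : xk * mon hk a = mon hk (Fin.snoc b ⟨(a (Fin.last k) : ℕ) + 1, by simp only [Fin.val_last]; omega⟩) := by
          rw [mon_snoc hk b, hmona]
          show xk * (mon hk' b * xk ^ ((a (Fin.last k) : ℕ))) = mon hk' b * xk ^ ((a (Fin.last k) : ℕ) + 1)
          rw [pow_succ]
          ring
        rw [this]
        exact memT _
      · have hlast : (a (Fin.last k) : ℕ) = k := by
          have := (a (Fin.last k)).2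
          simp only [Fin.val_last] at this
          omega
        have hXp : xk * mon hk a = mon hk' b * xk ^ (k + 1) := by
          rw [hmona, hlast, pow_succ]
          ring
        rw [hXp, X_pow_top k hkn, ← hxk, mul_neg, Finset.mul_sum]
        apply neg_mem
        apply Submodule.sum_mem
        intro j hj
        rw [Finset.mem_range] at hj
        have heq : mon hk' b * ((Q n (k + 1)).coeff j * xk ^ j)
            = (⟨(Q n (k + 1)).coeff j, Q_coeff_mem (k + 1) hk j⟩ : B n (k + 1))
              • mon hk (Fin.snoc b ⟨j, by simp only [Fin.val_last]; omega⟩) := by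
          rw [Subalgebra.smul_def, smul_eq_mul, mon_snoc hk b]
          show _ = (Q n (k + 1)).coeff j * (mon hk' b * xk ^ j)
          ring
        rw [heq]
        exact Submodule.smul_mem _ _ (memT _)
    | zero => rw [mul_zero]; exact zero_mem _
    | add y z _ _ h1 h2 => rw [mul_add]; exact add_mem h1 h2
    | smul s y _ h1 =>
      rw [Subalgebra.smul_def, smul_eq_mul, mul_left_comm, ← smul_eq_mul, ← Subalgebra.smul_def]
      exact Submodule.smul_mem _ _ h1
  have powXk : ∀ m : ℕ, ∀ x ∈ T, xk ^ m * x ∈ T := by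
    intro m
    induction m with
    | zero => intro x hx; rw [pow_zero, one_mul]; exact hx
    | succ m ihm =>
      intro x hx
      rw [pow_succ, mul_assoc]
      exact ihm _ (mulXk x hx)
  have smulBk : ∀ s ∈ B n k, ∀ x ∈ T, s * x ∈ T := by
    intro s hs
    have hsN : s ∈ N n k hkn := B_le_N k hkn s hs
    clear hs
    induction hsN using Submodule.span_induction with
    | mem y hy =>
      obtain ⟨j, rfl⟩ := hy
      intro x hx
      exact powXk _ x hx
    | zero => intro x _; rw [zero_mul]; exact zero_mem _
    | add y z _ _ h1 h2 =>
      intro x hx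
      rw [add_mul]
      exact add_mem (h1 x hx) (h2 x hx)
    | smul d y _ h1 =>
      intro x hx
      rw [Subalgebra.smul_def, smul_eq_mul, mul_assoc, ← smul_eq_mul, ← Subalgebra.smul_def]
      exact Submodule.smul_mem _ _ (h1 x hx)
  rw [eq_top_iff]
  rintro x -
  have hx : x ∈ Submodule.span (B n k) (Set.range (mon hk')) := by rw [ihSP]; trivial
  induction hx using Submodule.span_induction with
  | mem y hy =>
    obtain ⟨b, rfl⟩ := hy
    have : mon hk' b = mon hk (Fin.snoc b (0 : Fin (k + 1))) := by
      rw [mon_snoc hk b]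
      simp
    rw [this]
    exact memT _
  | zero => exact zero_mem _
  | add y z _ _ h1 h2 => exact add_mem h1 h2
  | smul s y _ h1 =>
    rw [Subalgebra.smul_def, smul_eq_mul]
    exact smulBk s s.2 y h1


theorem main : ∀ k (hk : k ≤ n),
    LinearIndependent (B n k) (mon hk) ∧
      Submodule.span (B n k) (Set.range (mon hk)) = ⊤ := by
  intro k
  induction k with
  | zero =>
    intro hk
    constructor
    · rw [Fintype.linearIndependent_iff]
      intro g hg i
      have hu : (Finset.univ : Finset ((i : Fin 0) → Fin (i.1 + 1))) = {i} := by
        apply Finset.eq_singleton_iff_unique_mem.2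
        exact ⟨Finset.mem_univ _, fun x _ => Subsingleton.elim x i⟩
      rw [hu, Finset.sum_singleton] at hg
      have h1 : mon hk i = 1 := by rw [mon]; simp
      rw [h1, Subalgebra.smul_def, smul_eq_mul, mul_one] at hg
      exact Subtype.ext hg
    · rw [eq_top_iff]
      rintro x -
      have hx : x ∈ B n 0 := by rw [B_zero_eq]; trivial
      have h1 : x = (⟨x, hx⟩ : B n 0) • mon hk (fun i => i.elim0) := by
        rw [mon, Subalgebra.smul_def, smul_eq_mul]; simp
      rw [h1]
      exact Submodule.smul_mem _ _ (Submodule.subset_span ⟨_, rfl⟩)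
  | succ k ih =>
    intro hk
    obtain ⟨ihLI, ihSP⟩ := ih (Nat.le_of_succ_le hk)
    exact ⟨main_indep k hk ihLI, main_span k hk ihSP⟩

theorem card_pi (n : ℕ) :
    Fintype.card ((i : Fin n) → Fin (i.1 + 1)) = Nat.factorial n := by
  rw [Fintype.card_pi]
  induction n with
  | zero => simp
  | succ m ih =>
    rw [Fin.prod_univ_castSucc]
    simp only [Fintype.card_fin, Fin.val_last, Fin.coe_castSucc] at *
    rw [ih, Nat.factorial_succ]
    ring

end PFOS


/-- `ℂ[y₁,…,yₙ]` is a free module of rank `n!` over the subring of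
symmetric polynomials, with free basis the monomials `y₁^{a₁} ⋯ yₙ^{aₙ}` with
`0 ≤ aᵢ < i`.  (Variables are indexed by `Fin n`, with `X i` playing the role of
`y_{i+1}`, so the condition `a_{i+1} < i+1` reads `a i ≤ i`.) -/
theorem polynomial_free_over_symmetric (n : ℕ) :
    Fintype.card ((i : Fin n) → Fin (i.1 + 1)) = Nat.factorial n ∧
    ∃ b : Module.Basis ((i : Fin n) → Fin (i.1 + 1))
        (symmetricSubalgebra (Fin n) ℂ) (MvPolynomial (Fin n) ℂ),
      ∀ a, b a = ∏ i : Fin n, (X i : MvPolynomial (Fin n) ℂ) ^ (a i : ℕ) := by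
  refine ⟨PFOS.card_pi n, ?_⟩
  rw [show symmetricSubalgebra (Fin n) ℂ = PFOS.B n n from PFOS.B_n_eq.symm]
  obtain ⟨hLI, hSP⟩ := PFOS.main (n := n) n le_rfl
  refine ⟨Module.Basis.mk hLI hSP.ge, ?_⟩
  intro a
  rw [Module.Basis.mk_apply, PFOS.mon]
  apply Finset.prod_congr rfl
  intro i _
  congr 1
end

section
/- For each t ∈ {1,...,n}, the weighting w_t on I = {1,...,n}×{1,...,n} defined by w_t(i,j) = 1 if |i−j| < n−t and 0 otherwise, is compatible with the q-mutation system S_t: for every pair (i,j) < (k,l) one has deg_{F_{w_t}}(f_{ij,kl}^{(t)}) ≤ w_t(i,j) + w_t(k,l). Moreover σ_{w_t}(S_t) = S_{t+1}. -/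
namespace QMut

open FreeAlgebra

variable {I : Type} [LinearOrder I]

/-- The free algebra on indeterminates `{x_i}_{i ∈ I}`. -/
abbrev FA (I : Type) : Type := FreeAlgebra ℂ I

/-- The monomial `x_{i₁} ⋯ x_{i_l}` associated to a list. -/
noncomputable def mono (l : List I) : FA I := (l.map (FreeAlgebra.ι ℂ)).prod

/-- A `q`-mutation system: scalars `q_{ij} ∈ ℂ^×` and elements `f_{ij}` of the free
algebra, for `i < j`. -/
structure MutSystem (I : Type) [LinearOrder I] where
  q : I → I → ℂ
  q_ne : ∀ i j : I, i < j → q i j ≠ 0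
  f : I → I → FA I

/-- The defining relations `x_j x_i = q_{ij} x_i x_j + f_{ij}` (`i < j`) of `A(S)`. -/
inductive MutRel (S : MutSystem I) : FA I → FA I → Prop
  | rel {i j : I} (h : i < j) :
      MutRel S (FreeAlgebra.ι ℂ j * FreeAlgebra.ι ℂ i)
        (S.q i j • (FreeAlgebra.ι ℂ i * FreeAlgebra.ι ℂ j) + S.f i j)

/-- The algebra `A(S)` associated to a `q`-mutation system. -/
noncomputable abbrev MutAlg (S : MutSystem I) : Type := RingQuot (MutRel S)

/-- The natural projection `p : F → A(S)`. -/
noncomputable def pr (S : MutSystem I) : FA I →ₐ[ℂ] MutAlg S :=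
  RingQuot.mkAlgHom ℂ (MutRel S)

/-- A list is standard when it is weakly increasing. -/
def Standard (l : List I) : Prop := l.Pairwise (· ≤ ·)

/-- One elementary mutation performed on one monomial of an element of `F`. -/
inductive MutStep (S : MutSystem I) : FA I → FA I → Prop
  | step (u v : List I) {i j : I} (h : i < j) (c : ℂ) (rest : FA I) :
      MutStep S
        (rest + c • (mono u * (FreeAlgebra.ι ℂ j * FreeAlgebra.ι ℂ i) * mono v))
        (rest + c •
          (mono u * (S.q i j • (FreeAlgebra.ι ℂ i * FreeAlgebra.ι ℂ j) + S.f i j) * mono v))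

/-- The finite mutation property: every monomial can be transformed into a linear
combination of standard monomials by finitely many elementary mutations. -/
def FMP (S : MutSystem I) : Prop :=
  ∀ l : List I, ∃ g : FA I,
    Relation.ReflTransGen (MutStep S) (mono l) g ∧
    g ∈ Submodule.span ℂ {m : FA I | ∃ l' : List I, Standard l' ∧ m = mono l'}

/-- The PBW property: the images of the standard monomials form a basis of `A(S)`. -/
def PBW (S : MutSystem I) : Prop :=
  ∃ B : Module.Basis {l : List I // Standard l} ℂ (MutAlg S),
    ∀ l : {l : List I // Standard l}, B l = pr S (mono l.1)

/-- The weighted degree of a monomial given a weighting `w : I → ℕ`. -/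
def wdeg (w : I → ℕ) (l : List I) : ℕ := (l.map w).sum

/-- The filtration `F_w` on the free algebra induced by a weighting. -/
noncomputable def FwF (w : I → ℕ) (d : ℕ) : Submodule ℂ (FA I) :=
  Submodule.span ℂ {m : FA I | ∃ l : List I, wdeg w l ≤ d ∧ m = mono l}

/-- A weighting `w` is compatible with `S` if `deg_{F_w} f_{ij} ≤ w(i) + w(j)`. -/
def Compatible (w : I → ℕ) (S : MutSystem I) : Prop :=
  ∀ i j : I, i < j → S.f i j ∈ FwF w (w i + w j)

/-- The filtration `F_{w,S}` on `A(S)`: the span of the images of standard monomials of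
weighted degree at most `d`. -/
noncomputable def FwS (S : MutSystem I) (w : I → ℕ) (d : ℕ) : Submodule ℂ (MutAlg S) :=
  Submodule.span ℂ
    {m : MutAlg S | ∃ l : List I, Standard l ∧ wdeg w l ≤ d ∧ m = pr S (mono l)}

end QMut

namespace QMut

variable {I : Type} [LinearOrder I]

/-- The homogeneous component of degree `d` of an element of the free algebra, with
respect to the grading induced by the weighting `w` (identifying `gr_{F_w} F` with `F`). -/
noncomputable def homComp (w : I → ℕ) (d : ℕ) (g : FA I) : FA I :=
  letI := Classical.decPred fun l : FreeMonoid I => wdeg w (FreeMonoid.toList l) = d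
  (FreeAlgebra.equivMonoidAlgebraFreeMonoid (R := ℂ) (X := I)).symm
    (MonoidAlgebra.ofCoeff (Finsupp.filter (fun l : FreeMonoid I => wdeg w (FreeMonoid.toList l) = d)
      (FreeAlgebra.equivMonoidAlgebraFreeMonoid (R := ℂ) (X := I) g).coeff))

/-- The symbol system `σ_w(S) = ({q_{ij}}, {σ_{F_w}^{w(i)+w(j)}(f_{ij})})`. -/
noncomputable def sigmaw (S : MutSystem I) (w : I → ℕ) : MutSystem I where
  q := S.q
  q_ne := S.q_ne
  f := fun i j => homComp w (w i + w j) (S.f i j)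

end QMut

namespace QMat

open QMut

/-- The index set `{(i,j)}` ordered lexicographically (`(i,j) ≤ (k,l)` iff `ni+j ≤ nk+l`). -/
abbrev Idx (n : ℕ) : Type := Lex (Fin n × Fin n)

/-- The weighting `w_t(i,j) = 1` if `|i−j| < n−t` and `0` otherwise. -/
def wt (n t : ℕ) (p : Idx n) : ℕ :=
  if |(((ofLex p).1 : ℤ)) - (((ofLex p).2 : ℤ))| < (n : ℤ) - (t : ℤ) then 1 else 0

/-- The scalars `q_{ij,kl}` of the mutation systems `S_t`: `q⁻¹` for a `q`-commuting
pair (same row or same column), `1` otherwise. -/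
noncomputable def qS (n : ℕ) (q : ℂ) (p p' : Idx n) : ℂ :=
  if (ofLex p).1 = (ofLex p').1 ∨ (ofLex p).2 = (ofLex p').2 then q⁻¹ else 1

/-- The elements `f_{ij,kl}^{(t)} = (q⁻¹−q)·w_{t-1}(i,l)·w_{t-1}(k,j)·x_{il}x_{kj}`
(for `i < k`, `j < l`), and `0` otherwise. -/
noncomputable def fS (n : ℕ) (q : ℂ) (t : ℕ) (p p' : Idx n) : QMut.FA (Idx n) :=
  if (ofLex p).1 < (ofLex p').1 ∧ (ofLex p).2 < (ofLex p').2 then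
    ((q⁻¹ - q) * ((wt n (t-1) (toLex ((ofLex p).1, (ofLex p').2)) : ℕ) : ℂ)
        * ((wt n (t-1) (toLex ((ofLex p').1, (ofLex p).2)) : ℕ) : ℂ)) •
      (FreeAlgebra.ι ℂ (toLex ((ofLex p).1, (ofLex p').2)) *
        FreeAlgebra.ι ℂ (toLex ((ofLex p').1, (ofLex p).2)))
  else 0

/-- The `q`-mutation system `S_t` associated to quantum `n×n` matrices
(`A(S_1) = O(M_q(n))`). -/
noncomputable def Ssys (n : ℕ) (q : ℂ) (hq : q ≠ 0) (t : ℕ) : MutSystem (Idx n) where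
  q := qS n q
  q_ne := fun _ _ _ => by
    unfold qS; split_ifs
    · exact inv_ne_zero hq
    · exact one_ne_zero
  f := fS n q t

end QMat


namespace QMut
open FreeAlgebra
variable {I : Type} [LinearOrder I]

omit [LinearOrder I] in
lemma FA_equiv_mul (a b : I) :
    equivMonoidAlgebraFreeMonoid (R := ℂ) (ι ℂ a * ι ℂ b) =
      MonoidAlgebra.single (FreeMonoid.ofList [a, b]) 1 := by
  rw [map_mul]
  simp [equivMonoidAlgebraFreeMonoid, MonoidAlgebra.of_apply, MonoidAlgebra.single_mul_single]

lemma homComp_zero (w : I → ℕ) (d : ℕ) : homComp w d (0 : FA I) = 0 := by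
  simp [homComp, Finsupp.filter_zero]

lemma homComp_smul_mul (w : I → ℕ) (d : ℕ) (c : ℂ) (a b : I) :
    homComp w d (c • (ι ℂ a * ι ℂ b)) =
      if w a + w b = d then c • (ι ℂ a * ι ℂ b) else 0 := by
  unfold homComp
  rw [map_smul, FA_equiv_mul, MonoidAlgebra.coeff_smul, MonoidAlgebra.coeff_single, Finsupp.smul_single]
  have hsym : (equivMonoidAlgebraFreeMonoid (R := ℂ) (X := I)).symm
      (MonoidAlgebra.single (FreeMonoid.ofList [a, b]) (c • 1)) = c • (ι ℂ a * ι ℂ b) := by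
    rw [show MonoidAlgebra.single (FreeMonoid.ofList [a, b]) (c • (1 : ℂ)) =
        c • MonoidAlgebra.single (FreeMonoid.ofList [a, b]) (1 : ℂ) from
        (by rw [← MonoidAlgebra.ofCoeff_single, ← MonoidAlgebra.ofCoeff_single,
          ← MonoidAlgebra.ofCoeff_smul, Finsupp.smul_single]),
      map_smul, ← FA_equiv_mul, AlgEquiv.symm_apply_apply]
  by_cases h : w a + w b = d
  · rw [@Finsupp.filter_single_of_pos _ _ _ _
      (Classical.decPred _) _ _ (by simpa [wdeg] using h)]
    rw [if_pos h, MonoidAlgebra.ofCoeff_single, hsym]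
  · rw [@Finsupp.filter_single_of_neg _ _ _ _
      (Classical.decPred _) _ _ (by simpa [wdeg] using h)]
    rw [if_neg h, MonoidAlgebra.ofCoeff_zero, map_zero]

lemma MutSystem.ext' {S T : MutSystem I} (hq : S.q = T.q) (hf : S.f = T.f) : S = T := by
  cases S; cases T; simp_all

lemma mul_mem_FwF (w : I → ℕ) (a b : I) (d : ℕ) (hd : w a + w b ≤ d) :
    ι ℂ a * ι ℂ b ∈ FwF w d := by
  apply Submodule.subset_span
  exact ⟨[a, b], by simpa [wdeg] using hd, by simp [mono]⟩

end QMut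

namespace QMat
open QMut

lemma wt_cases (n t : ℕ) (p : Idx n) : wt n t p = 0 ∨ wt n t p = 1 := by
  unfold wt; split_ifs <;> simp

lemma wt_anti {n : ℕ} {t t' : ℕ} (h : t ≤ t') (p : Idx n) : wt n t' p ≤ wt n t p := by
  unfold wt
  generalize |(((ofLex p).1 : ℤ)) - (((ofLex p).2 : ℤ))| = A
  split_ifs <;> omega

lemma wt_key {n t : ℕ} (ht1 : 1 ≤ t) (i k j l : Fin n) (hik : i < k) (hjl : j < l)
    (ha : wt n (t - 1) (toLex (i, l)) = 1) (hb : wt n (t - 1) (toLex (k, j)) = 1) :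
    wt n t (toLex (i, j)) = 1 ∧ wt n t (toLex (k, l)) = 1 := by
  have hik' : (i : ℤ) < (k : ℤ) := by exact_mod_cast hik
  have hjl' : (j : ℤ) < (l : ℤ) := by exact_mod_cast hjl
  have ht : ((t - 1 : ℕ) : ℤ) = (t : ℤ) - 1 := by omega
  unfold wt at ha hb ⊢
  simp only [ofLex_toLex] at ha hb ⊢
  rw [ht] at ha hb
  split_ifs at ha with h1 <;> split_ifs at hb with h2
  · rw [abs_lt] at h1 h2
    refine ⟨if_pos ?_, if_pos ?_⟩ <;> rw [abs_lt] <;> omega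
  all_goals simp_all

end QMat

open QMut QMat in
/-- the weighting `w_t` is compatible with the `q`-mutation system `S_t`
(`deg_{F_{w_t}} f_{ij,kl}^{(t)} ≤ w_t(i,j) + w_t(k,l)` for all `(i,j) < (k,l)`), and
moreover `σ_{w_t}(S_t) = S_{t+1}`. -/
theorem wt_compatible_and_sigmaw (n : ℕ) (q : ℂ) (hq : q ≠ 0)
    (t : ℕ) (ht1 : 1 ≤ t) (htn : t ≤ n) :
    Compatible (wt n t) (Ssys n q hq t) ∧
    sigmaw (Ssys n q hq t) (wt n t) = Ssys n q hq (t + 1) := by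
  constructor
  · intro p p' _
    show fS n q t p p' ∈ FwF (wt n t) (wt n t p + wt n t p')
    unfold fS
    split_ifs with hc
    · obtain ⟨hik, hjl⟩ := hc
      set a := toLex ((ofLex p).1, (ofLex p').2) with ha
      set b := toLex ((ofLex p').1, (ofLex p).2) with hb
      rcases wt_cases n (t - 1) a with h | h
      · rw [h]; simp
      rcases wt_cases n (t - 1) b with h' | h'
      · rw [h']; simp
      · refine Submodule.smul_mem _ _ (mul_mem_FwF _ a b _ ?_)
        obtain ⟨hp, hp'⟩ := wt_key ht1 _ _ _ _ hik hjl h h'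
        have e1 : wt n t p = 1 := hp
        have e2 : wt n t p' = 1 := hp'
        have g1 := wt_cases n t a
        have g2 := wt_cases n t b
        omega
    · exact Submodule.zero_mem _
  · refine MutSystem.ext' rfl ?_
    funext p p'
    show homComp (wt n t) (wt n t p + wt n t p') (fS n q t p p') = fS n q (t + 1) p p'
    unfold fS
    simp only [Nat.add_sub_cancel]
    split_ifs with hc
    · obtain ⟨hik, hjl⟩ := hc
      set a := toLex ((ofLex p).1, (ofLex p').2) with ha
      set b := toLex ((ofLex p').1, (ofLex p).2) with hb
      rcases wt_cases n (t - 1) a with h | h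
      · have h0 : wt n t a = 0 := by
          have := wt_anti (Nat.sub_le t 1) a; omega
        rw [h, h0]; simp [homComp_zero]
      rcases wt_cases n (t - 1) b with h' | h'
      · have h0 : wt n t b = 0 := by
          have := wt_anti (Nat.sub_le t 1) b; omega
        rw [h', h0]; simp [homComp_zero]
      · obtain ⟨hp, hp'⟩ := wt_key ht1 _ _ _ _ hik hjl h h'
        have e1 : wt n t p = 1 := hp
        have e2 : wt n t p' = 1 := hp'
        rw [h, h', homComp_smul_mul, e1, e2]
        rcases wt_cases n t a with g | g <;> rcases wt_cases n t b with g' | g' <;>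
          rw [g, g'] <;> norm_num
    · rw [homComp_zero]
end
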